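/- Let f : ℝⁿ × ℝ → ℝⁿ be continuously differentiable in its first argument with Jacobian J(x,t) = ∂f/∂x(x,t), let M be a symmetric positive definite n×n real matrix and λ > 0. Suppose that for all x ∈ ℝⁿ and t ≥ 0 one has J(x,t)ᵀM + M·J(x,t) ⪯ -2λM. Then for any two solutions x₁, x₂ of ẋ = f(x,t) defined on [0,∞), one has (x₁(t)-x₂(t))ᵀM(x₁(t)-x₂(t)) ≤ e^{-2λt}·(x₁(0)-x₂(0))ᵀM(x₁(0)-x₂(0)) for all t ≥ 0; in particular all solutions converge to each other exponentially (contraction with respect to the constant metric M). -/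

import Mathlib

open Matrix

lemma hasDerivAt_dot {n : ℕ} {u v : ℝ → Fin n → ℝ} {u' v' : Fin n → ℝ} {t : ℝ}
    (hu : HasDerivAt u u' t) (hv : HasDerivAt v v' t) :
    HasDerivAt (fun t => u t ⬝ᵥ v t) (u' ⬝ᵥ v t + u t ⬝ᵥ v') t := by
  simp only [dotProduct]
  rw [← Finset.sum_add_distrib]
  exact HasDerivAt.fun_sum fun i _ => (hasDerivAt_pi.mp hu i).fun_mul (hasDerivAt_pi.mp hv i)

lemma hasDerivAt_mulVec {n : ℕ} (M : Matrix (Fin n) (Fin n) ℝ) {v : ℝ → Fin n → ℝ}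
    {v' : Fin n → ℝ} {t : ℝ} (hv : HasDerivAt v v' t) :
    HasDerivAt (fun t => M.mulVec (v t)) (M.mulVec v') t := by
  have := ((Matrix.toLin' M).toContinuousLinearMap.hasFDerivAt (x := v t)).comp_hasDerivAt t hv
  simpa [Function.comp_def] using this

lemma lmi_bound {n : ℕ} {A M : Matrix (Fin n) (Fin n) ℝ} {lam : ℝ} (w : Fin n → ℝ)
    (h : ((-(2 * lam)) • M - (Aᵀ * M + M * A)).PosSemidef) :
    (A.mulVec w) ⬝ᵥ M.mulVec w + w ⬝ᵥ M.mulVec (A.mulVec w)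
      ≤ -(2 * lam) * (w ⬝ᵥ M.mulVec w) := by
  have h0 := h.dotProduct_mulVec_nonneg w
  simp only [star_trivial, Matrix.sub_mulVec, Matrix.add_mulVec, Matrix.smul_mulVec,
    dotProduct_sub, dotProduct_add, dotProduct_smul, smul_eq_mul] at h0
  have h1 : w ⬝ᵥ (Aᵀ * M).mulVec w = (A.mulVec w) ⬝ᵥ M.mulVec w := by
    rw [← Matrix.mulVec_mulVec, Matrix.dotProduct_mulVec, Matrix.vecMul_transpose]
  have h2 : w ⬝ᵥ (M * A).mulVec w = w ⬝ᵥ M.mulVec (A.mulVec w) := by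
    rw [← Matrix.mulVec_mulVec]
  rw [h1, h2] at h0
  linarith

/-- Contraction with respect to a constant metric `M`: if the Jacobian `J(x,t)` of `f`
satisfies `J(x,t)ᵀM + MJ(x,t) ⪯ -2λM` for all `x` and `t ≥ 0`, then any two solutions of
`ẋ = f(x,t)` converge to each other exponentially in the metric `M`. -/
theorem contraction_constant_metric {n : ℕ}
    (f : (Fin n → ℝ) → ℝ → (Fin n → ℝ))
    (J : (Fin n → ℝ) → ℝ → Matrix (Fin n) (Fin n) ℝ)
    (hf : ∀ (x : Fin n → ℝ) (t : ℝ),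
      HasFDerivAt (fun y => f y t) ((Matrix.toLin' (J x t)).toContinuousLinearMap) x)
    (hJ : Continuous fun p : (Fin n → ℝ) × ℝ => J p.1 p.2)
    (M : Matrix (Fin n) (Fin n) ℝ) (hM : M.PosDef)
    (lam : ℝ) (hlam : 0 < lam)
    (hLMI : ∀ (x : Fin n → ℝ) (t : ℝ), 0 ≤ t →
      ((-(2 * lam)) • M - ((J x t)ᵀ * M + M * J x t)).PosSemidef)
    (x₁ x₂ : ℝ → (Fin n → ℝ))
    (h₁ : ∀ t : ℝ, 0 ≤ t → HasDerivAt x₁ (f (x₁ t) t) t)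
    (h₂ : ∀ t : ℝ, 0 ≤ t → HasDerivAt x₂ (f (x₂ t) t) t) :
    ∀ t : ℝ, 0 ≤ t →
      (x₁ t - x₂ t) ⬝ᵥ M.mulVec (x₁ t - x₂ t) ≤
        Real.exp (-(2 * lam) * t) * ((x₁ 0 - x₂ 0) ⬝ᵥ M.mulVec (x₁ 0 - x₂ 0)) := by
  intro t ht
  set e : ℝ → (Fin n → ℝ) := fun τ => x₁ τ - x₂ τ with he
  set V : ℝ → ℝ := fun τ => e τ ⬝ᵥ M.mulVec (e τ) with hVdef
  set D : ℝ → ℝ := fun τ => (f (x₁ τ) τ - f (x₂ τ) τ) ⬝ᵥ M.mulVec (e τ)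
    + e τ ⬝ᵥ M.mulVec (f (x₁ τ) τ - f (x₂ τ) τ) with hDdef
  have he' : ∀ τ, 0 ≤ τ → HasDerivAt e (f (x₁ τ) τ - f (x₂ τ) τ) τ :=
    fun τ hτ => (h₁ τ hτ).sub (h₂ τ hτ)
  have hVderiv : ∀ τ, 0 ≤ τ → HasDerivAt V (D τ) τ :=
    fun τ hτ => hasDerivAt_dot (he' τ hτ) (hasDerivAt_mulVec M (he' τ hτ))
  -- key differential inequality: D τ ≤ -(2 lam) V τ for τ ≥ 0
  have hkey : ∀ τ, 0 ≤ τ → D τ ≤ -(2 * lam) * V τ := by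
    intro τ hτ
    set w : Fin n → ℝ := e τ with hw
    set y : ℝ → Fin n → ℝ := fun s => f (x₂ τ + s • w) τ with hy
    have hyd : ∀ s : ℝ, HasDerivAt y ((J (x₂ τ + s • w) τ).mulVec w) s := by
      intro s
      have hline : HasDerivAt (fun s : ℝ => x₂ τ + s • w) w s := by
        simpa using ((hasDerivAt_id' s).smul_const w).const_add (x₂ τ)
      have := (hf (x₂ τ + s • w) τ).comp_hasDerivAt s hline
      simpa [Function.comp_def] using this
    set c : ℝ := -(2 * lam) * (w ⬝ᵥ M.mulVec w) with hc
    set h : ℝ → ℝ := fun s => y s ⬝ᵥ M.mulVec w + w ⬝ᵥ M.mulVec (y s) with hh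
    have hhd : ∀ s : ℝ, HasDerivAt h
        (((J (x₂ τ + s • w) τ).mulVec w) ⬝ᵥ M.mulVec w
          + w ⬝ᵥ M.mulVec ((J (x₂ τ + s • w) τ).mulVec w)) s := by
      intro s
      have hA := hasDerivAt_dot (hyd s) (hasDerivAt_const s (M.mulVec w))
      have hB := hasDerivAt_dot (hasDerivAt_const s w) (hasDerivAt_mulVec M (hyd s))
      simpa using hA.fun_add hB
    have hmono : Monotone (fun s : ℝ => c * s - h s) := by
      have hφ : ∀ s : ℝ, HasDerivAt (fun s : ℝ => c * s - h s)
          (c - (((J (x₂ τ + s • w) τ).mulVec w) ⬝ᵥ M.mulVec w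
            + w ⬝ᵥ M.mulVec ((J (x₂ τ + s • w) τ).mulVec w))) s := by
        intro s
        simpa using ((hasDerivAt_id s).const_mul c).fun_sub (hhd s)
      refine monotone_of_deriv_nonneg (fun s => (hφ s).differentiableAt) ?_
      intro s
      rw [(hφ s).deriv]
      have := lmi_bound (A := J (x₂ τ + s • w) τ) w (hLMI (x₂ τ + s • w) τ hτ)
      linarith
    have h01 : c * 0 - h 0 ≤ c * 1 - h 1 := hmono zero_le_one
    have hy0 : y 0 = f (x₂ τ) τ := by simp [hy]
    have hy1 : y 1 = f (x₁ τ) τ := by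
      have hx : x₂ τ + (1:ℝ) • w = x₁ τ := by
        simp only [one_smul, hw, he]
        abel
      show f (x₂ τ + (1:ℝ) • w) τ = f (x₁ τ) τ
      rw [hx]
    have hD : D τ = h 1 - h 0 := by
      simp only [hDdef, hh, hy0, hy1, Matrix.mulVec_sub, dotProduct_sub, sub_dotProduct]
      ring
    rw [hD]
    linarith
  -- Gronwall via antitonicity of W = exp(2 lam τ) * V τ
  set W : ℝ → ℝ := fun τ => Real.exp (2 * lam * τ) * V τ with hWdef
  have hWd : ∀ τ, 0 ≤ τ → HasDerivAt W
      (2 * lam * Real.exp (2 * lam * τ) * V τ + Real.exp (2 * lam * τ) * D τ) τ := by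
    intro τ hτ
    have hexp : HasDerivAt (fun τ : ℝ => Real.exp (2 * lam * τ))
        (Real.exp (2 * lam * τ) * (2 * lam)) τ := by
      simpa using ((hasDerivAt_id τ).const_mul (2 * lam)).exp
    have := hexp.fun_mul (hVderiv τ hτ)
    exact this.congr_deriv (by ring)
  have hWcont : ContinuousOn W (Set.Ici (0:ℝ)) :=
    fun τ hτ => ((hWd τ hτ).continuousAt).continuousWithinAt
  have hanti : AntitoneOn W (Set.Ici (0:ℝ)) := by
    apply antitoneOn_of_deriv_nonpos (convex_Ici 0) hWcont
    · intro τ hτ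
      rw [interior_Ici] at hτ
      exact ((hWd τ hτ.le).differentiableAt).differentiableWithinAt
    · intro τ hτ
      rw [interior_Ici] at hτ
      rw [(hWd τ hτ.le).deriv]
      have h1 := hkey τ hτ.le
      have h2 := Real.exp_pos (2 * lam * τ)
      nlinarith
  have hWt : W t ≤ W 0 := hanti Set.self_mem_Ici (Set.mem_Ici.mpr ht) ht
  have hW0 : W 0 = V 0 := by simp [hWdef]
  have hVt : Real.exp (2 * lam * t) * V t ≤ V 0 := by
    rw [← hW0]; exact hWt
  have hfinal : V t ≤ Real.exp (-(2 * lam) * t) * V 0 := by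
    have hstep : V t = Real.exp (-(2 * lam) * t) * (Real.exp (2 * lam * t) * V t) := by
      rw [← mul_assoc, ← Real.exp_add]
      ring_nf
      simp
    rw [hstep]
    exact mul_le_mul_of_nonneg_left hVt (Real.exp_nonneg _)
  exact hfinal
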